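/- Let (f_i)_{i∈I} be a Parseval frame for a Hilbert space H₁ and let (g_i)_{i∈I} be vectors spanning a dense subspace of a Hilbert space H₂ such that ⟨g_i, g_j⟩ = δ_{i,j} − ⟨f_i, f_j⟩ for all i, j ∈ I. Then (f_i ⊕ g_i)_{i∈I} is an orthonormal basis for H₁ ⊕ H₂, and (g_i)_{i∈I} is a Parseval frame for H₂. -/

import Mathlib

open scoped BigOperators

private lemma hb_norm_sq {ι E : Type*} [NormedAddCommGroup E]
    [InnerProductSpace ℂ E] [CompleteSpace E] (b : HilbertBasis ι ℂ E) (x : E) :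
    ‖x‖ ^ 2 = ∑' i, ‖(inner ℂ x (b i) : ℂ)‖ ^ 2 := by
  have h := b.tsum_inner_mul_inner x x
  have h2 : ∀ i, (inner ℂ x (b i) : ℂ) * inner ℂ (b i) x
      = ((‖(inner ℂ x (b i) : ℂ)‖ ^ 2 : ℝ) : ℂ) := by
    intro i
    have hc : (inner ℂ (b i) x : ℂ) = starRingEnd ℂ (inner ℂ x (b i)) := (inner_conj_symm _ _).symm
    rw [hc, Complex.mul_conj']
    norm_cast
  simp only [h2] at h
  rw [← Complex.ofReal_tsum, inner_self_eq_norm_sq_to_K] at h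
  have hre := congrArg Complex.re h
  simp only [← Complex.ofReal_pow, Complex.ofReal_re] at hre
  simpa [← Complex.ofReal_pow] using hre.symm

private lemma mem_closure_span_of_parseval {ι E : Type*} [NormedAddCommGroup E]
    [InnerProductSpace ℂ E] [CompleteSpace E] {v : ι → E} (hv : Orthonormal ℂ v)
    {x : E} (hx : ‖x‖ ^ 2 ≤ ∑' i, ‖(inner ℂ (v i) x : ℂ)‖ ^ 2) :
    x ∈ (Submodule.span ℂ (Set.range v)).topologicalClosure := by
  set S := (Submodule.span ℂ (Set.range v)).topologicalClosure with hS
  haveI : CompleteSpace S := (Submodule.isClosed_topologicalClosure _).completeSpace_coe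
  have hvS : ∀ i, v i ∈ S := fun i =>
    Submodule.le_topologicalClosure _ (Submodule.subset_span (Set.mem_range_self i))
  have hproj : ∀ i, (inner ℂ (v i) ((S.orthogonalProjectionOnto x : E)) : ℂ) = inner ℂ (v i) x := by
    intro i
    have h0 : (inner ℂ (x - (S.orthogonalProjectionOnto x : E)) (v i) : ℂ) = 0 := by
      rw [← S.starProjection_apply]; exact S.starProjection_inner_eq_zero x (v i) (hvS i)
    have : (inner ℂ (v i) (x - S.orthogonalProjectionOnto x) : ℂ) = 0 := by
      rw [← inner_conj_symm, h0, map_zero]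
    rw [inner_sub_right, sub_eq_zero] at this
    exact this.symm
  have hb : ∑' i, ‖(inner ℂ (v i) ((S.orthogonalProjectionOnto x : E)) : ℂ)‖ ^ 2
      ≤ ‖(S.orthogonalProjectionOnto x : E)‖ ^ 2 := hv.tsum_inner_products_le _
  simp only [hproj] at hb
  have hpyth := Submodule.norm_sq_eq_add_norm_sq_projection x S
  have hn1 : ‖S.orthogonalProjectionOnto x‖ = ‖(S.orthogonalProjectionOnto x : E)‖ := rfl
  have hn2 : ‖Sᗮ.orthogonalProjectionOnto x‖ = ‖(Sᗮ.orthogonalProjectionOnto x : E)‖ := rfl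
  rw [hn1, hn2] at hpyth
  have h0 : ‖(Sᗮ.orthogonalProjectionOnto x : E)‖ ^ 2 ≤ 0 := by nlinarith [hx, hb, hpyth]
  have h1 : Sᗮ.orthogonalProjectionOnto x = 0 := by
    have : ‖(Sᗮ.orthogonalProjectionOnto x : E)‖ = 0 := by nlinarith [norm_nonneg ((Sᗮ.orthogonalProjectionOnto x : E)), sq_nonneg ‖(Sᗮ.orthogonalProjectionOnto x : E)‖]
    ext1
    simpa using norm_eq_zero.mp this
  have := Submodule.orthogonalProjectionOnto_eq_zero_iff.mp h1
  rwa [Submodule.orthogonal_orthogonal] at this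

/-- If `(f i)` is a Parseval frame for `H₁` and `(g i)` spans a dense subspace of `H₂`
with `⟨g i, g j⟩ = δ_{ij} - ⟨f i, f j⟩`, then `(f i ⊕ g i)` is an orthonormal basis of
`H₁ ⊕ H₂` and `(g i)` is a Parseval frame for `H₂`. -/
theorem parseval_frame_complement_dilation {I H₁ H₂ : Type*} [DecidableEq I]
    [NormedAddCommGroup H₁] [InnerProductSpace ℂ H₁] [CompleteSpace H₁]
    [NormedAddCommGroup H₂] [InnerProductSpace ℂ H₂] [CompleteSpace H₂]
    (f : I → H₁) (g : I → H₂)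
    (hf : ∀ v : H₁, ‖v‖ ^ 2 = ∑' i, ‖(inner ℂ v (f i) : ℂ)‖ ^ 2)
    (hspan : (Submodule.span ℂ (Set.range g)).topologicalClosure = ⊤)
    (hg : ∀ i j, (inner ℂ (g i) (g j) : ℂ)
      = (if i = j then 1 else 0) - (inner ℂ (f i) (f j) : ℂ)) :
    (Orthonormal ℂ (fun i => (WithLp.equiv 2 (H₁ × H₂)).symm (f i, g i)) ∧
      (Submodule.span ℂ
        (Set.range (fun i => (WithLp.equiv 2 (H₁ × H₂)).symm (f i, g i)))).topologicalClosure
        = ⊤) ∧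
    ∀ w : H₂, ‖w‖ ^ 2 = ∑' i, ‖(inner ℂ w (g i) : ℂ)‖ ^ 2 := by
  set e : I → WithLp 2 (H₁ × H₂) := fun i => (WithLp.equiv 2 (H₁ × H₂)).symm (f i, g i) with he
  have hinner : ∀ i j, (inner ℂ (e i) (e j) : ℂ) = inner ℂ (f i) (f j) + inner ℂ (g i) (g j) := by
    intro i j
    rw [WithLp.prod_inner_apply]
    rfl
  have hortho : Orthonormal ℂ e := by
    rw [orthonormal_iff_ite]
    intro i j
    rw [hinner, hg]
    ring
  set S := (Submodule.span ℂ (Set.range e)).topologicalClosure with hS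
  have h1 : ∀ v : H₁, (WithLp.equiv 2 (H₁ × H₂)).symm (v, 0) ∈ S := by
    intro v
    apply mem_closure_span_of_parseval hortho
    have hc : ∀ i, (inner ℂ (e i) ((WithLp.equiv 2 (H₁ × H₂)).symm (v, 0)) : ℂ)
        = inner ℂ (f i) v := by
      intro i
      rw [WithLp.prod_inner_apply]
      simp [he, WithLp.equiv_symm_apply]
    calc ‖(WithLp.equiv 2 (H₁ × H₂)).symm (v, 0)‖ ^ 2 = ‖v‖ ^ 2 := by
          rw [WithLp.equiv_symm_apply, WithLp.norm_toLp_fst]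
      _ = ∑' i, ‖(inner ℂ v (f i) : ℂ)‖ ^ 2 := hf v
      _ ≤ ∑' i, ‖(inner ℂ (e i) ((WithLp.equiv 2 (H₁ × H₂)).symm (v, 0)) : ℂ)‖ ^ 2 := by
          apply le_of_eq
          congr 1
          funext i
          rw [hc i, ← norm_inner_symm]
  have h2 : ∀ i, (WithLp.equiv 2 (H₁ × H₂)).symm (0, g i) ∈ S := by
    intro i
    have hei : e i ∈ S := Submodule.le_topologicalClosure _
      (Submodule.subset_span (Set.mem_range_self i))
    have : (WithLp.equiv 2 (H₁ × H₂)).symm (0, g i)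
        = e i - (WithLp.equiv 2 (H₁ × H₂)).symm (f i, 0) := by
      rw [he, WithLp.equiv_symm_apply, ← WithLp.toLp_sub]
      norm_num
    rw [this]
    exact Submodule.sub_mem _ hei (h1 (f i))
  have h3 : ∀ w : H₂, (WithLp.equiv 2 (H₁ × H₂)).symm (0, w) ∈ S := by
    set L : H₂ →L[ℂ] WithLp 2 (H₁ × H₂) :=
      ((WithLp.prodContinuousLinearEquiv 2 ℂ H₁ H₂).symm :
        (H₁ × H₂) →L[ℂ] WithLp 2 (H₁ × H₂)).comp (ContinuousLinearMap.inr ℂ H₁ H₂) with hL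
    have hLapp : ∀ w : H₂, L w = (WithLp.equiv 2 (H₁ × H₂)).symm (0, w) := fun w => rfl
    set T : Submodule ℂ H₂ := S.comap (L : H₂ →ₗ[ℂ] WithLp 2 (H₁ × H₂)) with hT
    have hTclosed : IsClosed (T : Set H₂) :=
      IsClosed.preimage L.continuous (Submodule.isClosed_topologicalClosure _)
    have hrange : Set.range g ⊆ T := by
      rintro _ ⟨i, rfl⟩
      show L (g i) ∈ S
      rw [hLapp]
      exact h2 i
    have hTtop : T = ⊤ := by
      have hle : (Submodule.span ℂ (Set.range g)).topologicalClosure ≤ T :=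
        Submodule.topologicalClosure_minimal _ (Submodule.span_le.mpr hrange) hTclosed
      rw [hspan] at hle
      exact eq_top_iff.mpr hle
    intro w
    have : w ∈ T := hTtop ▸ Submodule.mem_top
    rw [hT, Submodule.mem_comap] at this
    rwa [← hLapp]
  have hdense : S = ⊤ := by
    rw [Submodule.eq_top_iff']
    intro x
    have : x = (WithLp.equiv 2 (H₁ × H₂)).symm (x.fst, 0)
        + (WithLp.equiv 2 (H₁ × H₂)).symm (0, x.snd) := by
      rw [WithLp.equiv_symm_apply, ← WithLp.toLp_add]
      norm_num
      rfl
    rw [this]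
    exact Submodule.add_mem _ (h1 x.fst) (h3 x.snd)
  refine ⟨⟨hortho, hdense⟩, ?_⟩
  intro w
  set b : HilbertBasis I ℂ (WithLp 2 (H₁ × H₂)) := HilbertBasis.mk hortho (by rw [← hS, hdense])
  have hb : ⇑b = e := HilbertBasis.coe_mk _ _
  have := hb_norm_sq b ((WithLp.equiv 2 (H₁ × H₂)).symm (0, w))
  rw [WithLp.equiv_symm_apply, WithLp.norm_toLp_snd] at this
  rw [this]
  congr 1
  funext i
  rw [hb]
  rw [WithLp.prod_inner_apply]
  simp [he, WithLp.equiv_symm_apply]
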